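/- Let C and C' be double categories with C globularily generated, and let G, G' : C → C' be double functors. If the decorated horizontalizations H*G and H*G' of G and G' are equal, then G = G'. Consequently the decorated horizontalization functor H* is faithful on the category of globularily generated double categories and double functors. -/
import Mathlib


universe u

/-! Basic raw categories and functors. -/


structure CatData : Type (u + 1) where
  Obj : Type u
  Hom : Obj → Obj → Type u
  id : (a : Obj) → Hom a a
  comp : {a b c : Obj} → Hom a b → Hom b c → Hom a c
  id_comp : ∀ {a b : Obj} (f : Hom a b), comp (id a) f = f
  comp_id : ∀ {a b : Obj} (f : Hom a b), comp f (id b) = f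
  assoc : ∀ {a b c d : Obj} (f : Hom a b) (g : Hom b c) (h : Hom c d),
    comp (comp f g) h = comp f (comp g h)

namespace CatData

/-- The canonical morphism associated to an equality of objects. -/
def eqHom (C : CatData.{u}) {a b : C.Obj} (h : a = b) : C.Hom a b := h ▸ C.id a

/-- Conjugation of a morphism by equalities of objects. -/
def conj (C : CatData.{u}) {a a' b b' : C.Obj} (h1 : a' = a) (h2 : b = b')
    (f : C.Hom a b) : C.Hom a' b' :=
  C.comp (C.eqHom h1) (C.comp f (C.eqHom h2))

@[simp] theorem eqHom_refl (C : CatData.{u}) (a : C.Obj) : C.eqHom (rfl : a = a) = C.id a := rfl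

@[simp] theorem eqHom_trans (C : CatData.{u}) {a b c : C.Obj} (h : a = b) (h' : b = c) :
    C.comp (C.eqHom h) (C.eqHom h') = C.eqHom (h.trans h') := by
  subst h; subst h'; exact C.id_comp _

@[simp] theorem conj_rfl (C : CatData.{u}) {a b : C.Obj} (f : C.Hom a b) :
    C.conj rfl rfl f = f := by
  show C.comp (C.id a) (C.comp f (C.id b)) = f
  rw [C.comp_id, C.id_comp]

theorem eqHom_conj (C : CatData.{u}) {a a' b b' : C.Obj} (h1 : a' = a) (h2 : b = b')
    (h : a = b) : C.conj h1 h2 (C.eqHom h) = C.eqHom ((h1.trans h).trans h2) := by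
  subst h1; subst h2; subst h
  exact C.conj_rfl _

end CatData

structure Fctr (C D : CatData.{u}) where
  obj : C.Obj → D.Obj
  map : {a b : C.Obj} → C.Hom a b → D.Hom (obj a) (obj b)
  map_id : ∀ a : C.Obj, map (C.id a) = D.id (obj a)
  map_comp : ∀ {a b c : C.Obj} (f : C.Hom a b) (g : C.Hom b c),
    map (C.comp f g) = D.comp (map f) (map g)

namespace Fctr

def idF (C : CatData.{u}) : Fctr C C where
  obj := fun a => a
  map := fun f => f
  map_id := fun _ => rfl
  map_comp := fun _ _ => rfl

def compF {C D E : CatData.{u}} (F : Fctr C D) (G : Fctr D E) : Fctr C E where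
  obj := fun a => G.obj (F.obj a)
  map := fun f => G.map (F.map f)
  map_id := fun a => by
    show G.map (F.map (C.id a)) = E.id (G.obj (F.obj a))
    rw [F.map_id, G.map_id]
  map_comp := fun f g => by
    show G.map (F.map (C.comp f g)) = E.comp (G.map (F.map f)) (G.map (F.map g))
    rw [F.map_comp, G.map_comp]

theorem map_eqHom {C D : CatData.{u}} (F : Fctr C D) {a b : C.Obj} (h : a = b) :
    F.map (C.eqHom h) = D.eqHom (congrArg F.obj h) := by
  subst h; simpa using F.map_id a

end Fctr

/-! Pseudo double categories.

A (pseudo) double category is given by a category `C0` of objects and vertical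
morphisms, a category `C1` of horizontal morphisms and 2-morphisms, source, target
and horizontal identity functors, a horizontal composition (given on objects of `C1`
for composable pairs, and on morphisms of `C1` for compatible pairs of 2-morphisms),
together with globular left/right identity and associativity isomorphisms. -/

structure DblCat : Type (u + 1) where
  C0 : CatData.{u}
  C1 : CatData.{u}
  s : Fctr C1 C0
  t : Fctr C1 C0
  i : Fctr C0 C1
  i_s_obj : ∀ a : C0.Obj, s.obj (i.obj a) = a
  i_t_obj : ∀ a : C0.Obj, t.obj (i.obj a) = a
  i_s_map : ∀ {a b : C0.Obj} (u : C0.Hom a b),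
    s.map (i.map u) = C0.conj (i_s_obj a) (i_s_obj b).symm u
  i_t_map : ∀ {a b : C0.Obj} (u : C0.Hom a b),
    t.map (i.map u) = C0.conj (i_t_obj a) (i_t_obj b).symm u
  hObj : (f g : C1.Obj) → t.obj f = s.obj g → C1.Obj
  hObj_s : ∀ (f g : C1.Obj) (w : t.obj f = s.obj g), s.obj (hObj f g w) = s.obj f
  hObj_t : ∀ (f g : C1.Obj) (w : t.obj f = s.obj g), t.obj (hObj f g w) = t.obj g
  hMap : {f f' g g' : C1.Obj} → (w : t.obj f = s.obj g) → (w' : t.obj f' = s.obj g') →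
    (Φ : C1.Hom f f') → (Ψ : C1.Hom g g') →
    C0.comp (t.map Φ) (C0.eqHom w') = C0.comp (C0.eqHom w) (s.map Ψ) →
    C1.Hom (hObj f g w) (hObj f' g' w')
  hMap_id : ∀ {f g : C1.Obj} (w : t.obj f = s.obj g) (pf : _),
    hMap w w (C1.id f) (C1.id g) pf = C1.id (hObj f g w)
  hMap_comp : ∀ {f f' f'' g g' g'' : C1.Obj}
    (w : t.obj f = s.obj g) (w' : t.obj f' = s.obj g') (w'' : t.obj f'' = s.obj g'')
    (Φ : C1.Hom f f') (Φ' : C1.Hom f' f'') (Ψ : C1.Hom g g') (Ψ' : C1.Hom g' g'')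
    (pf : _) (pf' : _) (pf'' : _),
    hMap w w'' (C1.comp Φ Φ') (C1.comp Ψ Ψ') pf'' =
      C1.comp (hMap w w' Φ Ψ pf) (hMap w' w'' Φ' Ψ' pf')
  hMap_s : ∀ {f f' g g' : C1.Obj} (w : t.obj f = s.obj g) (w' : t.obj f' = s.obj g')
    (Φ : C1.Hom f f') (Ψ : C1.Hom g g') (pf : _),
    s.map (hMap w w' Φ Ψ pf) = C0.conj (hObj_s f g w) (hObj_s f' g' w').symm (s.map Φ)
  hMap_t : ∀ {f f' g g' : C1.Obj} (w : t.obj f = s.obj g) (w' : t.obj f' = s.obj g')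
    (Φ : C1.Hom f f') (Ψ : C1.Hom g g') (pf : _),
    t.map (hMap w w' Φ Ψ pf) = C0.conj (hObj_t f g w) (hObj_t f' g' w').symm (t.map Ψ)
  lunit : (f : C1.Obj) → C1.Hom (hObj (i.obj (s.obj f)) f (i_t_obj (s.obj f))) f
  lunitInv : (f : C1.Obj) → C1.Hom f (hObj (i.obj (s.obj f)) f (i_t_obj (s.obj f)))
  lunit_iso₁ : ∀ f : C1.Obj, C1.comp (lunit f) (lunitInv f) = C1.id _
  lunit_iso₂ : ∀ f : C1.Obj, C1.comp (lunitInv f) (lunit f) = C1.id _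
  lunit_s : ∀ f : C1.Obj, ∃ h, s.map (lunit f) = C0.eqHom h
  lunit_t : ∀ f : C1.Obj, ∃ h, t.map (lunit f) = C0.eqHom h
  lunitInv_s : ∀ f : C1.Obj, ∃ h, s.map (lunitInv f) = C0.eqHom h
  lunitInv_t : ∀ f : C1.Obj, ∃ h, t.map (lunitInv f) = C0.eqHom h
  runit : (f : C1.Obj) → C1.Hom (hObj f (i.obj (t.obj f)) (i_s_obj (t.obj f)).symm) f
  runitInv : (f : C1.Obj) → C1.Hom f (hObj f (i.obj (t.obj f)) (i_s_obj (t.obj f)).symm)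
  runit_iso₁ : ∀ f : C1.Obj, C1.comp (runit f) (runitInv f) = C1.id _
  runit_iso₂ : ∀ f : C1.Obj, C1.comp (runitInv f) (runit f) = C1.id _
  runit_s : ∀ f : C1.Obj, ∃ h, s.map (runit f) = C0.eqHom h
  runit_t : ∀ f : C1.Obj, ∃ h, t.map (runit f) = C0.eqHom h
  runitInv_s : ∀ f : C1.Obj, ∃ h, s.map (runitInv f) = C0.eqHom h
  runitInv_t : ∀ f : C1.Obj, ∃ h, t.map (runitInv f) = C0.eqHom h
  assocC : {f g h : C1.Obj} → (w1 : t.obj f = s.obj g) → (w2 : t.obj g = s.obj h) →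
    C1.Hom (hObj (hObj f g w1) h ((hObj_t f g w1).trans w2))
      (hObj f (hObj g h w2) (w1.trans (hObj_s g h w2).symm))
  assocCInv : {f g h : C1.Obj} → (w1 : t.obj f = s.obj g) → (w2 : t.obj g = s.obj h) →
    C1.Hom (hObj f (hObj g h w2) (w1.trans (hObj_s g h w2).symm))
      (hObj (hObj f g w1) h ((hObj_t f g w1).trans w2))
  assoc_iso₁ : ∀ {f g h : C1.Obj} (w1 : t.obj f = s.obj g) (w2 : t.obj g = s.obj h),
    C1.comp (assocC w1 w2) (assocCInv w1 w2) = C1.id _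
  assoc_iso₂ : ∀ {f g h : C1.Obj} (w1 : t.obj f = s.obj g) (w2 : t.obj g = s.obj h),
    C1.comp (assocCInv w1 w2) (assocC w1 w2) = C1.id _
  assoc_s : ∀ {f g h : C1.Obj} (w1 : t.obj f = s.obj g) (w2 : t.obj g = s.obj h),
    ∃ hh, s.map (assocC w1 w2) = C0.eqHom hh
  assoc_t : ∀ {f g h : C1.Obj} (w1 : t.obj f = s.obj g) (w2 : t.obj g = s.obj h),
    ∃ hh, t.map (assocC w1 w2) = C0.eqHom hh
  assocInv_s : ∀ {f g h : C1.Obj} (w1 : t.obj f = s.obj g) (w2 : t.obj g = s.obj h),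
    ∃ hh, s.map (assocCInv w1 w2) = C0.eqHom hh
  assocInv_t : ∀ {f g h : C1.Obj} (w1 : t.obj f = s.obj g) (w2 : t.obj g = s.obj h),
    ∃ hh, t.map (assocCInv w1 w2) = C0.eqHom hh

namespace DblCat

/-- A 2-morphism is globular if its source and target are vertical identities. -/
def Globular (D : DblCat.{u}) {f g : D.C1.Obj} (Φ : D.C1.Hom f g) : Prop :=
  (∃ h, D.s.map Φ = D.C0.eqHom h) ∧ (∃ h, D.t.map Φ = D.C0.eqHom h)

/-- A 2-morphism is the horizontal identity of some vertical morphism. -/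
def IsHId (D : DblCat.{u}) {f g : D.C1.Obj} (Φ : D.C1.Hom f g) : Prop :=
  ∃ (a b : D.C0.Obj) (u : D.C0.Hom a b),
    f = D.i.obj a ∧ g = D.i.obj b ∧ HEq Φ (D.i.map u)

end DblCat

/-! Sub-double categories, globular generation, and the vertical/horizontal filtrations. -/

structure SubCat (C : CatData.{u}) where
  objs : Set C.Obj
  homs : ∀ ⦃a b : C.Obj⦄, C.Hom a b → Prop
  src_mem : ∀ {a b : C.Obj} {f : C.Hom a b}, homs f → a ∈ objs
  tgt_mem : ∀ {a b : C.Obj} {f : C.Hom a b}, homs f → b ∈ objs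
  id_mem : ∀ {a : C.Obj}, a ∈ objs → homs (C.id a)
  comp_mem : ∀ {a b c : C.Obj} {f : C.Hom a b} {g : C.Hom b c},
    homs f → homs g → homs (C.comp f g)

structure SubDbl (D : DblCat.{u}) where
  S0 : SubCat D.C0
  S1 : SubCat D.C1
  s_obj_mem : ∀ {f : D.C1.Obj}, f ∈ S1.objs → D.s.obj f ∈ S0.objs
  t_obj_mem : ∀ {f : D.C1.Obj}, f ∈ S1.objs → D.t.obj f ∈ S0.objs
  s_map_mem : ∀ {f g : D.C1.Obj} {Φ : D.C1.Hom f g}, S1.homs Φ → S0.homs (D.s.map Φ)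
  t_map_mem : ∀ {f g : D.C1.Obj} {Φ : D.C1.Hom f g}, S1.homs Φ → S0.homs (D.t.map Φ)
  i_obj_mem : ∀ {a : D.C0.Obj}, a ∈ S0.objs → D.i.obj a ∈ S1.objs
  i_map_mem : ∀ {a b : D.C0.Obj} {u : D.C0.Hom a b}, S0.homs u → S1.homs (D.i.map u)
  hObj_mem : ∀ {f g : D.C1.Obj} (w : D.t.obj f = D.s.obj g),
    f ∈ S1.objs → g ∈ S1.objs → D.hObj f g w ∈ S1.objs
  hMap_mem : ∀ {f f' g g' : D.C1.Obj} (w : D.t.obj f = D.s.obj g)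
    (w' : D.t.obj f' = D.s.obj g') (Φ : D.C1.Hom f f') (Ψ : D.C1.Hom g g') (pf : _),
    S1.homs Φ → S1.homs Ψ → S1.homs (D.hMap w w' Φ Ψ pf)
  lunit_mem : ∀ {f : D.C1.Obj}, f ∈ S1.objs → S1.homs (D.lunit f) ∧ S1.homs (D.lunitInv f)
  runit_mem : ∀ {f : D.C1.Obj}, f ∈ S1.objs → S1.homs (D.runit f) ∧ S1.homs (D.runitInv f)
  assoc_mem : ∀ {f g h : D.C1.Obj} (w1 : D.t.obj f = D.s.obj g) (w2 : D.t.obj g = D.s.obj h),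
    f ∈ S1.objs → g ∈ S1.objs → h ∈ S1.objs →
    S1.homs (D.assocC w1 w2) ∧ S1.homs (D.assocCInv w1 w2)

/-- A double category is globularily generated if the only sub-double category of it
containing all of its globular 2-morphisms is the double category itself. -/
def DblCat.GloballyGenerated (D : DblCat.{u}) : Prop :=
  ∀ S : SubDbl D,
    (∀ {f g : D.C1.Obj} (Φ : D.C1.Hom f g), D.Globular Φ → S.S1.homs Φ) →
    ((∀ a : D.C0.Obj, a ∈ S.S0.objs) ∧ (∀ {a b : D.C0.Obj} (u : D.C0.Hom a b), S.S0.homs u) ∧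
      (∀ f : D.C1.Obj, f ∈ S.S1.objs) ∧ (∀ {f g : D.C1.Obj} (Φ : D.C1.Hom f g), S.S1.homs Φ))

/-- The subcategory (closure) generated by a collection of morphisms. -/
inductive catClos (C : CatData.{u}) (S : ∀ ⦃a b : C.Obj⦄, C.Hom a b → Prop) :
    ∀ ⦃a b : C.Obj⦄, C.Hom a b → Prop
  | base {a b : C.Obj} {f : C.Hom a b} : S f → catClos C S f
  | id (a : C.Obj) : catClos C S (C.id a)
  | comp {a b c : C.Obj} {f : C.Hom a b} {g : C.Hom b c} :
      catClos C S f → catClos C S g → catClos C S (C.comp f g)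

/-- Closure of a collection of 2-morphisms under horizontal composition. -/
inductive horClos (D : DblCat.{u}) (S : ∀ ⦃f g : D.C1.Obj⦄, D.C1.Hom f g → Prop) :
    ∀ ⦃f g : D.C1.Obj⦄, D.C1.Hom f g → Prop
  | base {f g : D.C1.Obj} {Φ : D.C1.Hom f g} : S Φ → horClos D S Φ
  | hcomp {f f' g g' : D.C1.Obj} (w : D.t.obj f = D.s.obj g) (w' : D.t.obj f' = D.s.obj g')
      (Φ : D.C1.Hom f f') (Ψ : D.C1.Hom g g') (pf : _) :
      horClos D S Φ → horClos D S Ψ → horClos D S (D.hMap w w' Φ Ψ pf)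

/-- The horizontal filtration of a double category: `Hfil D k` is the collection
`H_{k+1}` of the paper; `Hfil D 0 = H₁` is the union of the globular 2-morphisms and
the horizontal identities of vertical morphisms, and `H_{k+1}` consists of the
horizontal composites of 2-morphisms of `V_k`. -/
def DblCat.Hfil (D : DblCat.{u}) : ℕ → ∀ ⦃f g : D.C1.Obj⦄, D.C1.Hom f g → Prop
  | 0 => fun _ _ Φ => D.Globular Φ ∨ D.IsHId Φ
  | k + 1 => horClos D (catClos D.C1 (D.Hfil k))

/-- The vertical filtration of a double category: `Vfil D k` is the collection of
morphisms of the subcategory `V_{k+1}` of `C1` generated by `H_{k+1}`. -/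
def DblCat.Vfil (D : DblCat.{u}) (k : ℕ) : ∀ ⦃f g : D.C1.Obj⦄, D.C1.Hom f g → Prop :=
  catClos D.C1 (D.Hfil k)

/-- Strictness of a double category: horizontal composition is strictly unital and
associative and the unitors and associator are identities. -/
structure DblCat.IsStrict (D : DblCat.{u}) : Prop where
  hObj_idl : ∀ f : D.C1.Obj, D.hObj (D.i.obj (D.s.obj f)) f (D.i_t_obj (D.s.obj f)) = f
  hObj_idr : ∀ f : D.C1.Obj, D.hObj f (D.i.obj (D.t.obj f)) (D.i_s_obj (D.t.obj f)).symm = f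
  hObj_assoc : ∀ {f g h : D.C1.Obj} (w1 : D.t.obj f = D.s.obj g) (w2 : D.t.obj g = D.s.obj h),
    D.hObj (D.hObj f g w1) h ((D.hObj_t f g w1).trans w2) =
      D.hObj f (D.hObj g h w2) (w1.trans ((D.hObj_s g h w2)).symm)
  lunit_eq : ∀ f : D.C1.Obj, D.lunit f = D.C1.eqHom (hObj_idl f)
  runit_eq : ∀ f : D.C1.Obj, D.runit f = D.C1.eqHom (hObj_idr f)
  assoc_eq : ∀ {f g h : D.C1.Obj} (w1 : D.t.obj f = D.s.obj g) (w2 : D.t.obj g = D.s.obj h),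
    D.assocC w1 w2 = D.C1.eqHom (hObj_assoc w1 w2)

/-! Double functors. -/

structure DblFctr (C D : DblCat.{u}) where
  F0 : Fctr C.C0 D.C0
  F1 : Fctr C.C1 D.C1
  s_obj : ∀ f : C.C1.Obj, D.s.obj (F1.obj f) = F0.obj (C.s.obj f)
  t_obj : ∀ f : C.C1.Obj, D.t.obj (F1.obj f) = F0.obj (C.t.obj f)
  s_map : ∀ {f g : C.C1.Obj} (Φ : C.C1.Hom f g),
    D.s.map (F1.map Φ) = D.C0.conj (s_obj f) (s_obj g).symm (F0.map (C.s.map Φ))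
  t_map : ∀ {f g : C.C1.Obj} (Φ : C.C1.Hom f g),
    D.t.map (F1.map Φ) = D.C0.conj (t_obj f) (t_obj g).symm (F0.map (C.t.map Φ))
  i_obj : ∀ a : C.C0.Obj, F1.obj (C.i.obj a) = D.i.obj (F0.obj a)
  i_map : ∀ {a b : C.C0.Obj} (u : C.C0.Hom a b),
    F1.map (C.i.map u) = D.C1.conj (i_obj a) (i_obj b).symm (D.i.map (F0.map u))
  hObj_comm : ∀ (f g : C.C1.Obj) (w : C.t.obj f = C.s.obj g),
    F1.obj (C.hObj f g w) =
      D.hObj (F1.obj f) (F1.obj g)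
        ((t_obj f).trans ((congrArg F0.obj w).trans (s_obj g).symm))
  hMap_comm : ∀ {f f' g g' : C.C1.Obj} (w : C.t.obj f = C.s.obj g)
    (w' : C.t.obj f' = C.s.obj g') (Φ : C.C1.Hom f f') (Ψ : C.C1.Hom g g')
    (pf : _) (pf' : _),
    F1.map (C.hMap w w' Φ Ψ pf) =
      D.C1.conj (hObj_comm f g w) (hObj_comm f' g' w').symm
        (D.hMap _ _ (F1.map Φ) (F1.map Ψ) pf')
  lunit_comm : ∀ f : C.C1.Obj, HEq (F1.map (C.lunit f)) (D.lunit (F1.obj f))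
  runit_comm : ∀ f : C.C1.Obj, HEq (F1.map (C.runit f)) (D.runit (F1.obj f))
  assoc_comm : ∀ {f g h : C.C1.Obj} (w1 : C.t.obj f = C.s.obj g)
    (w2 : C.t.obj g = C.s.obj h),
    HEq (F1.map (C.assocC w1 w2))
      (D.assocC ((t_obj f).trans ((congrArg F0.obj w1).trans (s_obj g).symm))
        ((t_obj g).trans ((congrArg F0.obj w2).trans (s_obj h).symm)))

/-- Two double functors have equal decorated horizontalizations `H*G = H*G'` iff they
have the same object functor (= same action on the decoration), the same action on
horizontal morphisms, and the same action on globular 2-morphisms. -/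
def SameDecH {C C' : DblCat.{u}} (G G' : DblFctr C C') : Prop :=
  G.F0 = G'.F0 ∧ (∀ f : C.C1.Obj, G.F1.obj f = G'.F1.obj f) ∧
    (∀ {f g : C.C1.Obj} (Φ : C.C1.Hom f g), C.Globular Φ → HEq (G.F1.map Φ) (G'.F1.map Φ))


section AuxStmt4

theorem heq_comp_aux (E : CatData.{u}) {a b c a' b' c' : E.Obj}
    (ha : a = a') (hb : b = b') (hc : c = c')
    {f : E.Hom a b} {f' : E.Hom a' b'} {g : E.Hom b c} {g' : E.Hom b' c'}
    (hf : HEq f f') (hg : HEq g g') : HEq (E.comp f g) (E.comp f' g') := by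
  subst ha; subst hb; subst hc
  rw [eq_of_heq hf, eq_of_heq hg]

theorem heq_id_aux (E : CatData.{u}) {a a' : E.Obj} (ha : a = a') :
    HEq (E.id a) (E.id a') := by subst ha; rfl

theorem heq_conj_aux (E : CatData.{u}) {X X' A A' B B' Y Y' : E.Obj}
    (eX : X = X') (eA : A = A') (eB : B = B') (eY : Y = Y')
    (h1 : X = A) (h2 : B = Y) (h1' : X' = A') (h2' : B' = Y')
    {f : E.Hom A B} {f' : E.Hom A' B'} (hf : HEq f f') :
    HEq (E.conj h1 h2 f) (E.conj h1' h2' f') := by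
  subst eX; subst eA; subst eB; subst eY
  rw [eq_of_heq hf]

theorem hObj_congr_aux (D : DblCat.{u}) {f g f' g' : D.C1.Obj} (e1 : f = f') (e2 : g = g')
    (w : D.t.obj f = D.s.obj g) (v : D.t.obj f' = D.s.obj g') :
    D.hObj f g w = D.hObj f' g' v := by subst e1; subst e2; rfl

theorem heq_hMap_aux (D : DblCat.{u}) {f1 g1 f2 g2 f1' g1' f2' g2' : D.C1.Obj}
    (e1 : f1 = f1') (e2 : g1 = g1') (e3 : f2 = f2') (e4 : g2 = g2')
    (w : D.t.obj f1 = D.s.obj g1) (w' : D.t.obj f2 = D.s.obj g2)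
    (v : D.t.obj f1' = D.s.obj g1') (v' : D.t.obj f2' = D.s.obj g2')
    {Φ : D.C1.Hom f1 f2} {Φ' : D.C1.Hom f1' f2'} {Ψ : D.C1.Hom g1 g2} {Ψ' : D.C1.Hom g1' g2'}
    (hΦ : HEq Φ Φ') (hΨ : HEq Ψ Ψ') (pf pf') :
    HEq (D.hMap w w' Φ Ψ pf) (D.hMap v v' Φ' Ψ' pf') := by
  subst e1; subst e2; subst e3; subst e4
  obtain rfl := eq_of_heq hΦ
  obtain rfl := eq_of_heq hΨ
  exact HEq.rfl

theorem push_core_aux (E : CatData.{u}) {A B A2 B2 L M N R : E.Obj}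
    {X : E.Hom A B} {Y : E.Hom A2 B2} (u : B = B2) (v : A = A2)
    (pf0 : E.comp X (E.eqHom u) = E.comp (E.eqHom v) Y)
    (h1 : L = A) (h1b : B = M) (W' : M = R) (W : L = N) (h2a : N = A2) (h2b : B2 = R) :
    E.comp (E.conj h1 h1b X) (E.eqHom W') = E.comp (E.eqHom W) (E.conj h2a h2b Y) := by
  subst u; subst v; subst h1; subst h1b; subst W'; subst W
  show E.comp (E.conj rfl rfl X) (E.eqHom rfl) = E.comp (E.eqHom rfl) (E.conj rfl rfl Y)
  simp only [CatData.conj_rfl, CatData.eqHom_refl, E.comp_id, E.id_comp] at pf0 ⊢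
  exact pf0

theorem DblFctr.pf_push {C D : DblCat.{u}} (G : DblFctr C D) {f f' g g' : C.C1.Obj}
    (w : C.t.obj f = C.s.obj g) (w' : C.t.obj f' = C.s.obj g')
    (Φ : C.C1.Hom f f') (Ψ : C.C1.Hom g g')
    (pf : C.C0.comp (C.t.map Φ) (C.C0.eqHom w') = C.C0.comp (C.C0.eqHom w) (C.s.map Ψ)) :
    D.C0.comp (D.t.map (G.F1.map Φ))
        (D.C0.eqHom ((G.t_obj f').trans ((congrArg G.F0.obj w').trans (G.s_obj g').symm))) =
      D.C0.comp
        (D.C0.eqHom ((G.t_obj f).trans ((congrArg G.F0.obj w).trans (G.s_obj g).symm)))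
        (D.s.map (G.F1.map Ψ)) := by
  have pf0 := congrArg G.F0.map pf
  rw [G.F0.map_comp, G.F0.map_comp, Fctr.map_eqHom, Fctr.map_eqHom] at pf0
  rw [G.t_map Φ, G.s_map Ψ]
  exact push_core_aux D.C0 (congrArg G.F0.obj w') (congrArg G.F0.obj w) pf0 _ _ _ _ _ _

theorem Fctr.ext_aux {C D : CatData.{u}} {F F' : Fctr C D}
    (hobj : ∀ a, F.obj a = F'.obj a)
    (hmap : ∀ {a b : C.Obj} (f : C.Hom a b), HEq (F.map f) (F'.map f)) : F = F' := by
  obtain ⟨o, m, _, _⟩ := F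
  obtain ⟨o', m', _, _⟩ := F'
  obtain rfl : o = o' := funext hobj
  obtain rfl : @m = @m' := by
    funext a b φ
    exact eq_of_heq (hmap φ)
  rfl

end AuxStmt4

/-- if `C` is globularily generated and two double functors
`G, G' : C → C'` have equal decorated horizontalizations, then `G = G'`.
Consequently the decorated horizontalization functor is faithful on the category of
globularily generated double categories and double functors. -/
theorem stmt4 (C C' : DblCat.{u}) (hC : C.GloballyGenerated)
    (G G' : DblFctr C C') (h : SameDecH G G') : G = G' := by
  obtain ⟨h0, hobj, hglob⟩ := h
  obtain ⟨-, -, -, hall⟩ := hC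
    { S0 :=
        { objs := Set.univ
          homs := fun _ _ _ => True
          src_mem := fun _ => trivial
          tgt_mem := fun _ => trivial
          id_mem := fun _ => trivial
          comp_mem := fun _ _ => trivial }
      S1 :=
        { objs := Set.univ
          homs := fun f g Φ => HEq (G.F1.map Φ) (G'.F1.map Φ)
          src_mem := fun _ => trivial
          tgt_mem := fun _ => trivial
          id_mem := fun {a} _ => by
            show HEq (G.F1.map (C.C1.id a)) (G'.F1.map (C.C1.id a))
            rw [G.F1.map_id, G'.F1.map_id]
            exact heq_id_aux _ (hobj a)
          comp_mem := fun {a b c f g} hf hg => by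
            show HEq (G.F1.map (C.C1.comp f g)) (G'.F1.map (C.C1.comp f g))
            rw [G.F1.map_comp, G'.F1.map_comp]
            exact heq_comp_aux _ (hobj a) (hobj b) (hobj c) hf hg }
      s_obj_mem := fun _ => trivial
      t_obj_mem := fun _ => trivial
      s_map_mem := fun _ => trivial
      t_map_mem := fun _ => trivial
      i_obj_mem := fun _ => trivial
      i_map_mem := fun {a b u} _ => by
        show HEq (G.F1.map (C.i.map u)) (G'.F1.map (C.i.map u))
        rw [G.i_map u, G'.i_map u]
        exact heq_conj_aux _ (hobj (C.i.obj a))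
          (show C'.i.obj (G.F0.obj a) = C'.i.obj (G'.F0.obj a) by rw [h0])
          (show C'.i.obj (G.F0.obj b) = C'.i.obj (G'.F0.obj b) by rw [h0])
          (hobj (C.i.obj b)) _ _ _ _
          (show HEq (C'.i.map (G.F0.map u)) (C'.i.map (G'.F0.map u)) by rw [h0])
      hObj_mem := fun _ _ _ => trivial
      hMap_mem := fun {f f' g g'} w w' Φ Ψ pf hΦ hΨ => by
        show HEq (G.F1.map (C.hMap w w' Φ Ψ pf)) (G'.F1.map (C.hMap w w' Φ Ψ pf))
        rw [G.hMap_comm w w' Φ Ψ pf (G.pf_push w w' Φ Ψ pf),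
            G'.hMap_comm w w' Φ Ψ pf (G'.pf_push w w' Φ Ψ pf)]
        exact heq_conj_aux _ (hobj _) (hObj_congr_aux _ (hobj f) (hobj g) _ _)
          (hObj_congr_aux _ (hobj f') (hobj g') _ _) (hobj _) _ _ _ _
          (heq_hMap_aux _ (hobj f) (hobj g) (hobj f') (hobj g') _ _ _ _ hΦ hΨ _ _)
      lunit_mem := fun {f} _ =>
        ⟨hglob _ ⟨C.lunit_s f, C.lunit_t f⟩, hglob _ ⟨C.lunitInv_s f, C.lunitInv_t f⟩⟩
      runit_mem := fun {f} _ =>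
        ⟨hglob _ ⟨C.runit_s f, C.runit_t f⟩, hglob _ ⟨C.runitInv_s f, C.runitInv_t f⟩⟩
      assoc_mem := fun w1 w2 _ _ _ =>
        ⟨hglob _ ⟨C.assoc_s w1 w2, C.assoc_t w1 w2⟩,
         hglob _ ⟨C.assocInv_s w1 w2, C.assocInv_t w1 w2⟩⟩ }
    (fun Φ hg => hglob Φ hg)
  have hF1 : G.F1 = G'.F1 := Fctr.ext_aux hobj (fun Φ => hall Φ)
  have hF0 : G.F0 = G'.F0 := h0
  cases G; cases G'
  cases hF0; cases hF1
  rfl
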